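/- Let K ≥ 2, N ≥ 1, x : {1,…,N} → {1,…,K} with every category nonempty, and let u ∈ Δ^N have all coordinates strictly positive with u ∈ R_x. Fix k ∈ {1,…,K}. With edge weights log η_{j→ℓ}(u), let m(ℓ) = min(ℓ→k) over simple walks from ℓ to k, and define θ* ∈ Δ by θ*_ℓ = exp(−m(ℓ)) / Σ_{ℓ'} exp(−m(ℓ')). Then u_n ∈ Δ_k(θ*) for every n ∈ I_k. -/

import Mathlib

noncomputable section

/-- The `ℓ`-th vertex of the probability simplex in `ℝ^K` (standard basis vector). -/
def vtx (K : ℕ) (ℓ : Fin K) : Fin K → ℝ := fun i => if i = ℓ then 1 else 0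

/-- The subsimplex `Δ_k(θ)`: convex hull of `{θ} ∪ {V_ℓ : ℓ ≠ k}`. -/
def subsimplex (K : ℕ) (k : Fin K) (θ : Fin K → ℝ) : Set (Fin K → ℝ) :=
  convexHull ℝ (insert θ {z | ∃ ℓ : Fin K, ℓ ≠ k ∧ z = vtx K ℓ})

/-- The weight of the walk `j 0, j 1, …, j m` for edge weights `w`. -/
def walkWeight (K : ℕ) (w : Fin K → Fin K → ℝ) (m : ℕ) (j : Fin (m + 1) → Fin K) : ℝ :=
  ∑ i : Fin m, w (j i.castSucc) (j i.succ)

/-- The minimum weight over simple walks (pairwise distinct vertices) from `a` to `b`. -/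
def minWalk (K : ℕ) (w : Fin K → Fin K → ℝ) (a b : Fin K) : ℝ :=
  sInf {v : ℝ | ∃ (m : ℕ) (j : Fin (m + 1) → Fin K),
    j 0 = a ∧ j (Fin.last m) = b ∧ Function.Injective j ∧ v = walkWeight K w m j}

lemma subsimplex_subset (K : ℕ) (k : Fin K) (θ : Fin K → ℝ) (hθk : 0 ≤ θ k) :
    subsimplex K k θ ⊆ {z : Fin K → ℝ | ∀ ℓ, θ ℓ * z k ≤ θ k * z ℓ} := by
  apply convexHull_min
  · rintro z (rfl | ⟨j, hj, rfl⟩) ℓ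
    · exact le_of_eq (mul_comm _ _)
    · simp only [vtx]
      rw [if_neg (fun h => hj h.symm), mul_zero]
      apply mul_nonneg hθk
      split <;> norm_num
  · intro a ha b hb s r hs hr hsr ℓ
    simp only [Set.mem_setOf_eq] at ha hb ⊢
    have h1 := ha ℓ; have h2 := hb ℓ
    simp only [Pi.add_apply, Pi.smul_apply, smul_eq_mul]
    nlinarith [mul_le_mul_of_nonneg_left h1 hs, mul_le_mul_of_nonneg_left h2 hr]

lemma mem_subsimplex_of (K : ℕ) (k : Fin K) (θ z : Fin K → ℝ)
    (hθ1 : ∑ i, θ i = 1) (hz0 : ∀ i, 0 ≤ z i) (hz1 : ∑ i, z i = 1)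
    (hθk : 0 < θ k) (h : ∀ ℓ, θ ℓ * z k ≤ θ k * z ℓ) :
    z ∈ subsimplex K k θ := by
  set t := z k / θ k with ht
  have htθ : t * θ k = z k := div_mul_cancel₀ _ hθk.ne'
  set w : Fin K → ℝ := fun ℓ => (z ℓ - t * θ ℓ) + (if ℓ = k then t else 0) with hw
  set p : Fin K → (Fin K → ℝ) := fun ℓ => if ℓ = k then θ else vtx K ℓ with hp
  have hwk : w k = t := by
    have h0 : z k - t * θ k = 0 := by rw [htθ]; ring
    simp [hw, h0]
  have hpk : p k = θ := by simp [hp]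
  have hw_nonneg : ∀ ℓ ∈ Finset.univ, 0 ≤ w ℓ := by
    intro ℓ _
    by_cases hℓ : ℓ = k
    · subst hℓ
      rw [hwk]
      exact div_nonneg (hz0 _) hθk.le
    · simp only [hw, if_neg hℓ, add_zero, sub_nonneg, ht]
      rw [div_mul_eq_mul_div, div_le_iff₀ hθk]
      nlinarith [h ℓ]
  have hw_sum : ∑ ℓ, w ℓ = 1 := by
    simp only [hw]
    rw [Finset.sum_add_distrib, Finset.sum_sub_distrib, ← Finset.mul_sum, hz1, hθ1,
      Finset.sum_ite_eq' Finset.univ k (fun _ => t)]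
    simp
  have hmem : ∀ ℓ ∈ Finset.univ, p ℓ ∈ subsimplex K k θ := by
    intro ℓ _
    apply subset_convexHull
    by_cases hℓ : ℓ = k
    · simp [hp, hℓ]
    · simp only [hp, if_neg hℓ]
      exact Set.mem_insert_of_mem _ ⟨ℓ, hℓ, rfl⟩
  have hsum := Convex.sum_mem (convex_convexHull ℝ _) hw_nonneg hw_sum hmem
  have hz_eq : z = ∑ ℓ, w ℓ • p ℓ := by
    funext i
    rw [Finset.sum_apply]
    simp only [Pi.smul_apply, smul_eq_mul]
    rw [← Finset.sum_erase_add _ _ (Finset.mem_univ k), hwk, hpk]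
    have herase : ∑ ℓ ∈ Finset.univ.erase k, w ℓ * p ℓ i
        = ∑ ℓ ∈ Finset.univ.erase k, (if i = ℓ then w ℓ else 0) := by
      apply Finset.sum_congr rfl
      intro ℓ hℓ
      rw [hp]
      simp only [if_neg (Finset.mem_erase.mp hℓ).1, vtx]
      split <;> simp
    rw [herase, Finset.sum_ite_eq]
    by_cases hik : i = k
    · subst hik
      simp [htθ]
    · rw [if_pos (Finset.mem_erase.mpr ⟨hik, Finset.mem_univ i⟩)]
      simp only [hw, if_neg hik, add_zero]
      ring
  rw [hz_eq]; exact hsum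

lemma telescope (m : ℕ) (g : Fin (m + 1) → ℝ) :
    ∑ i : Fin m, (g i.succ - g i.castSucc) = g (Fin.last m) - g 0 := by
  induction m with
  | zero => simp
  | succ n ih =>
    rw [Fin.sum_univ_castSucc]
    have := ih (fun i => g i.castSucc)
    simp only [Fin.succ_castSucc] at this ⊢
    rw [this]
    simp [Fin.succ_last]

theorem stmt15 (K N : ℕ) (hK : 2 ≤ K) (hN : 1 ≤ N)
    (x : Fin N → Fin K) (hx : ∀ k, ∃ n, x n = k)
    (u : Fin N → Fin K → ℝ) (hu : ∀ n, u n ∈ stdSimplex ℝ (Fin K))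
    (hupos : ∀ n ℓ, 0 < u n ℓ)
    (hR : ∃ θ ∈ stdSimplex ℝ (Fin K), ∀ n, u n ∈ subsimplex K (x n) θ)
    (η : Fin K → Fin K → ℝ)
    (hη : ∀ k ℓ, IsLeast {v : ℝ | ∃ n, x n = k ∧ v = u n ℓ / u n k} (η k ℓ))
    (k : Fin K) (m : Fin K → ℝ)
    (hm : ∀ ℓ, m ℓ = minWalk K (fun a b => Real.log (η a b)) ℓ k)
    (θstar : Fin K → ℝ)
    (hθstar : ∀ ℓ, θstar ℓ = Real.exp (-(m ℓ)) / ∑ ℓ' : Fin K, Real.exp (-(m ℓ'))) :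
    ∀ n, x n = k → u n ∈ subsimplex K k θstar := by
  obtain ⟨θ, hθS, hθR⟩ := hR
  have hθ0 : ∀ i, 0 ≤ θ i := hθS.1
  have hθ1 : ∑ i, θ i = 1 := hθS.2
  -- positivity of θ
  have hθpos : ∀ j, 0 < θ j := by
    intro j
    obtain ⟨n, hn⟩ := hx j
    have hsub := subsimplex_subset K j θ (hθ0 j) (hn ▸ hθR n)
    have hlow : ∀ ℓ, θ ℓ * u n j ≤ θ j * u n ℓ := hsub
    have hsum : ∑ ℓ, θ ℓ * u n j ≤ ∑ ℓ, θ j * u n ℓ :=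
      Finset.sum_le_sum (fun ℓ _ => hlow ℓ)
    rw [← Finset.sum_mul, ← Finset.mul_sum, hθ1, (hu n).2, one_mul, mul_one] at hsum
    exact lt_of_lt_of_le (hupos n j) hsum
  -- edge bound: log θ ℓ - log θ j ≤ log (η j ℓ)
  have hηpos : ∀ j ℓ, 0 < η j ℓ := by
    intro j ℓ
    obtain ⟨n, hn, hv⟩ := (hη j ℓ).1
    rw [hv]
    exact div_pos (hupos n ℓ) (hupos n j)
  have hedge : ∀ j ℓ, Real.log (θ ℓ) - Real.log (θ j) ≤ Real.log (η j ℓ) := by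
    intro j ℓ
    obtain ⟨n, hn, hv⟩ := (hη j ℓ).1
    have hsub := subsimplex_subset K j θ (hθ0 j) (hn ▸ hθR n)
    have hlow : θ ℓ * u n j ≤ θ j * u n ℓ := hsub ℓ
    have hratio : θ ℓ / θ j ≤ η j ℓ := by
      rw [hv, div_le_div_iff₀ (hθpos j) (hupos n j)]
      nlinarith
    calc Real.log (θ ℓ) - Real.log (θ j) = Real.log (θ ℓ / θ j) :=
          (Real.log_div (hθpos ℓ).ne' (hθpos j).ne').symm
      _ ≤ Real.log (η j ℓ) :=
          Real.log_le_log (div_pos (hθpos ℓ) (hθpos j)) hratio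
  -- lower bound for all walk weights from a to k
  have hWbound : ∀ a : Fin K, ∀ v ∈ {v : ℝ | ∃ (mm : ℕ) (j : Fin (mm + 1) → Fin K),
      j 0 = a ∧ j (Fin.last mm) = k ∧ Function.Injective j ∧
      v = ∑ i : Fin mm, Real.log (η (j i.castSucc) (j i.succ))},
      Real.log (θ k) - Real.log (θ a) ≤ v := by
    rintro a v ⟨mm, j, hj0, hjl, _, rfl⟩
    have hle : ∑ i : Fin mm, (Real.log (θ (j i.succ)) - Real.log (θ (j i.castSucc)))
        ≤ ∑ i : Fin mm, Real.log (η (j i.castSucc) (j i.succ)) :=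
      Finset.sum_le_sum (fun i _ => hedge _ _)
    rw [telescope mm (fun i => Real.log (θ (j i))), hj0, hjl] at hle
    exact hle
  -- walk set nonempty
  have hWne : ∀ a : Fin K, Set.Nonempty {v : ℝ | ∃ (mm : ℕ) (j : Fin (mm + 1) → Fin K),
      j 0 = a ∧ j (Fin.last mm) = k ∧ Function.Injective j ∧
      v = ∑ i : Fin mm, Real.log (η (j i.castSucc) (j i.succ))} := by
    intro a
    by_cases hak : a = k
    · refine ⟨0, 0, fun _ => a, rfl, hak, ?_, by simp⟩
      intro i1 i2 _
      apply Fin.ext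
      omega
    · refine ⟨Real.log (η a k), 1, ![a, k], rfl, rfl, ?_, ?_⟩
      · intro i1 i2 h12
        have h2 : ∀ i : Fin 2, i = 0 ∨ i = 1 := by decide
        rcases h2 i1 with rfl | rfl <;> rcases h2 i2 with rfl | rfl <;>
          simp only [Matrix.cons_val_zero, Matrix.cons_val_one, Matrix.head_cons] at h12 <;>
          first
            | rfl
            | exact absurd h12 hak
            | exact absurd h12.symm hak
      · rw [Fin.sum_univ_one]
        norm_num
  -- m k = 0 and m bounds
  have hmk : m k = 0 := by
    rw [hm k]
    apply le_antisymm
    · apply csInf_le ⟨Real.log (θ k) - Real.log (θ k), hWbound k⟩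
      refine ⟨0, fun _ => k, rfl, rfl, ?_, by simp⟩
      intro i1 i2 _
      apply Fin.ext
      omega
    · have := le_csInf (hWne k) (hWbound k)
      simp only [sub_self] at this
      exact this
  have hmlow : ∀ ℓ, -Real.log (η k ℓ) ≤ m ℓ := by
    intro ℓ
    have h1 : Real.log (θ k) - Real.log (θ ℓ) ≤ m ℓ := by
      rw [hm ℓ]
      exact le_csInf (hWne ℓ) (hWbound ℓ)
    have h2 := hedge k ℓ
    linarith
  -- θstar facts
  set S := ∑ ℓ' : Fin K, Real.exp (-(m ℓ')) with hS
  haveI : Nonempty (Fin K) := ⟨⟨0, by omega⟩⟩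
  have hSpos : 0 < S := Finset.sum_pos (fun i _ => Real.exp_pos _) Finset.univ_nonempty
  have hθstar0 : ∀ i, 0 ≤ θstar i := by
    intro i; rw [hθstar i]; positivity
  have hθstar1 : ∑ i, θstar i = 1 := by
    simp only [hθstar]
    rw [← Finset.sum_div, div_self hSpos.ne']
  have hθstark : 0 < θstar k := by
    rw [hθstar k]; positivity
  intro n hn
  apply mem_subsimplex_of K k θstar (u n) hθstar1 (hu n).1 (hu n).2 hθstark
  intro ℓ
  rw [hθstar ℓ, hθstar k, div_mul_eq_mul_div, div_mul_eq_mul_div,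
    div_le_div_iff_of_pos_right hSpos]
  rw [hmk]
  simp only [neg_zero, Real.exp_zero, one_mul]
  have hexp : Real.exp (-(m ℓ)) ≤ η k ℓ := by
    calc Real.exp (-(m ℓ)) ≤ Real.exp (Real.log (η k ℓ)) :=
          Real.exp_le_exp.mpr (by linarith [hmlow ℓ])
      _ = η k ℓ := Real.exp_log (hηpos k ℓ)
  have hrat : η k ℓ ≤ u n ℓ / u n k := (hη k ℓ).2 ⟨n, hn, rfl⟩
  calc Real.exp (-(m ℓ)) * u n k ≤ (u n ℓ / u n k) * u n k := by
        apply mul_le_mul_of_nonneg_right (le_trans hexp hrat) (hupos n k).le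
    _ = u n ℓ := div_mul_cancel₀ _ (hupos n k).ne'
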